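/- Let n ∈ ℕ and for 0 ≤ k ≤ n let F_k be a left-continuous integrable BV function. Let m^{(N)} (N ∈ ℕ) and m be maps from [0,∞) to the positive Borel measures on ℝ of total mass at most 1, each continuous with respect to the bounded Lipschitz metric, and suppose that for every t ≥ 0 and every f ∈ C₀(ℝ), ∫_ℝ f dm^{(N)}(t) → ∫_ℝ f dm(t) as N → ∞. Then for every R > 0 and every 0 ≤ k ≤ n, lim_{N→∞} ∫₀^R ∫_{−R}^{R} | (F_k*m^{(N)}(t))(x) − (F_k*m(t))(x) | dx dt = 0. -/

import Mathlib

open MeasureTheory Filter ZeroAtInfty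

/-- A test function for the bounded Lipschitz (Dudley) norm: `f ∈ C₀(ℝ)` with
`‖f‖_∞ + Lip(f) ≤ 1`. -/
def BLtest (f : C₀(ℝ, ℝ)) : Prop := ∃ K : NNReal, LipschitzWith K f ∧ ‖f‖ + (K : ℝ) ≤ 1

/-- The bounded Lipschitz (Dudley) distance `‖μ − ν‖_BL` between two finite
(positive) measures. -/
noncomputable def blDist (μ ν : MeasureTheory.Measure ℝ) : ℝ :=
  sSup {r | ∃ f : C₀(ℝ, ℝ), BLtest f ∧ r = (∫ x, f x ∂μ) - ∫ x, f x ∂ν}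

/-- Continuity of a measure-valued map on `[0,∞)` with respect to the bounded
Lipschitz metric. -/
def BLContinuous (m : ℝ → MeasureTheory.Measure ℝ) : Prop :=
  ∀ t : ℝ, 0 ≤ t → ∀ ε : ℝ, 0 < ε → ∃ δ : ℝ, 0 < δ ∧
    ∀ s : ℝ, 0 ≤ s → |s - t| < δ → blDist (m s) (m t) < ε

lemma s13_finite {μ : Measure ℝ} (h : μ Set.univ ≤ 1) : IsFiniteMeasure μ :=
  ⟨lt_of_le_of_lt h ENNReal.one_lt_top⟩

lemma s13_bdd (s : MeasureTheory.SignedMeasure ℝ) :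
    ∃ C : ℝ, 0 ≤ C ∧ (∀ x, |s (Set.Iio x)| ≤ C) ∧ Measurable fun x => s (Set.Iio x) := by
  set p := s.toJordanDecomposition.posPart with hp
  set q := s.toJordanDecomposition.negPart with hq
  have happ : ∀ x : ℝ, s (Set.Iio x) = (p (Set.Iio x)).toReal - (q (Set.Iio x)).toReal := by
    intro x
    conv_lhs => rw [← s.toSignedMeasure_toJordanDecomposition]
    rw [MeasureTheory.JordanDecomposition.toSignedMeasure]
    exact MeasureTheory.Measure.toSignedMeasure_sub_apply measurableSet_Iio
  have hm1 : Monotone fun x : ℝ => (p (Set.Iio x)).toReal := fun a b hab =>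
    ENNReal.toReal_mono (measure_ne_top p _) (measure_mono (Set.Iio_subset_Iio hab))
  have hm2 : Monotone fun x : ℝ => (q (Set.Iio x)).toReal := fun a b hab =>
    ENNReal.toReal_mono (measure_ne_top q _) (measure_mono (Set.Iio_subset_Iio hab))
  refine ⟨(p Set.univ).toReal + (q Set.univ).toReal,
    by positivity, fun x => ?_, by
      simp only [happ]; exact hm1.measurable.sub hm2.measurable⟩
  rw [happ]
  have h1 : (p (Set.Iio x)).toReal ≤ (p Set.univ).toReal :=
    ENNReal.toReal_mono (measure_ne_top p _) (measure_mono (Set.subset_univ _))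
  have h2 : (q (Set.Iio x)).toReal ≤ (q Set.univ).toReal :=
    ENNReal.toReal_mono (measure_ne_top q _) (measure_mono (Set.subset_univ _))
  have h3 : (0:ℝ) ≤ (p (Set.Iio x)).toReal := ENNReal.toReal_nonneg
  have h4 : (0:ℝ) ≤ (q (Set.Iio x)).toReal := ENNReal.toReal_nonneg
  rw [abs_sub_le_iff]; constructor <;> linarith

lemma s13_integrable {μ : Measure ℝ} [IsFiniteMeasure μ] {g : ℝ → ℝ}
    (hm : AEStronglyMeasurable g μ) {C : ℝ} (hC : ∀ x, |g x| ≤ C) : Integrable g μ :=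
  Integrable.mono' (integrable_const C) hm (Filter.Eventually.of_forall fun x => by
    simpa [Real.norm_eq_abs] using hC x)

lemma s13_ofReal_abs_integral {μ : Measure ℝ} (f : ℝ → ℝ) :
    ENNReal.ofReal |∫ y, f y ∂μ| ≤ ∫⁻ y, ENNReal.ofReal |f y| ∂μ := by
  calc ENNReal.ofReal |∫ y, f y ∂μ| = (‖∫ y, f y ∂μ‖₊ : ENNReal) := by
        rw [← Real.norm_eq_abs, ofReal_norm, enorm_eq_nnnorm]
    _ ≤ ∫⁻ y, (‖f y‖₊ : ENNReal) ∂μ := MeasureTheory.enorm_integral_le_lintegral_enorm f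
    _ = ∫⁻ y, ENNReal.ofReal |f y| ∂μ := by
        refine lintegral_congr fun y => ?_
        rw [← Real.norm_eq_abs, ofReal_norm, enorm_eq_nnnorm]

lemma s13_err {μ : Measure ℝ} (hμ : μ Set.univ ≤ 1) {h : ℝ → ℝ} (hm : Measurable h)
    (s : Set ℝ) :
    ∫⁻ x in s, ∫⁻ y, ENNReal.ofReal |h (x - y)| ∂μ ≤ ∫⁻ x, ENNReal.ofReal |h x| := by
  haveI := s13_finite hμ
  have hmeas : AEMeasurable (fun z : ℝ × ℝ => ENNReal.ofReal |h (z.1 - z.2)|)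
      ((volume : Measure ℝ).prod μ) := by
    exact ((hm.comp (measurable_fst.sub measurable_snd)).abs.ennreal_ofReal).aemeasurable
  calc ∫⁻ x in s, ∫⁻ y, ENNReal.ofReal |h (x - y)| ∂μ
      ≤ ∫⁻ x, ∫⁻ y, ENNReal.ofReal |h (x - y)| ∂μ :=
        lintegral_mono' Measure.restrict_le_self le_rfl
    _ = ∫⁻ y, ∫⁻ x, ENNReal.ofReal |h (x - y)| ∂volume ∂μ := lintegral_lintegral_swap hmeas
    _ = ∫⁻ y, (∫⁻ x, ENNReal.ofReal |h x|) ∂μ := by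
        refine lintegral_congr fun y => ?_
        exact lintegral_sub_right_eq_self (fun x => ENNReal.ofReal |h x|) y
    _ = (∫⁻ x, ENNReal.ofReal |h x|) * μ Set.univ := lintegral_const _
    _ ≤ (∫⁻ x, ENNReal.ofReal |h x|) * 1 := mul_le_mul_of_nonneg_left hμ (by positivity)
    _ = ∫⁻ x, ENNReal.ofReal |h x| := mul_one _

lemma s13_mass_toReal {μ : Measure ℝ} (hμ : μ Set.univ ≤ 1) : (μ Set.univ).toReal ≤ 1 := by
  have := ENNReal.toReal_mono ENNReal.one_ne_top hμ
  simpa using this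

lemma s13_absint {μ : Measure ℝ} (hμ : μ Set.univ ≤ 1) {f : ℝ → ℝ} {C : ℝ} (hC0 : 0 ≤ C)
    (hC : ∀ x, |f x| ≤ C) : |∫ x, f x ∂μ| ≤ C := by
  haveI := s13_finite hμ
  have h := norm_integral_le_of_norm_le_const (μ := μ) (f := f) (C := C)
    (Filter.Eventually.of_forall fun x => by simpa [Real.norm_eq_abs] using hC x)
  rw [Real.norm_eq_abs] at h
  calc |∫ x, f x ∂μ| ≤ C * (μ Set.univ).toReal := h
    _ ≤ C * 1 := by
        exact mul_le_mul_of_nonneg_left (s13_mass_toReal hμ) hC0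
    _ = C := mul_one C

lemma s13_bddAbove {μ ρ : Measure ℝ} (hμ : μ Set.univ ≤ 1) (hρ : ρ Set.univ ≤ 1) :
    BddAbove {r | ∃ f : C₀(ℝ, ℝ), BLtest f ∧ r = (∫ x, f x ∂μ) - ∫ x, f x ∂ρ} := by
  haveI := s13_finite hμ; haveI := s13_finite hρ
  refine ⟨2, ?_⟩
  rintro r ⟨f, ⟨K, hK, hsum⟩, rfl⟩
  have hf1 : ∀ x, |f x| ≤ 1 := by
    intro x
    have h1 : ‖f x‖ ≤ ‖f‖ := by
      have := f.toBCF.norm_coe_le_norm x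
      rwa [ZeroAtInftyContinuousMap.norm_toBCF_eq_norm] at this
    have h2 : ‖f‖ ≤ 1 := le_trans (le_add_of_nonneg_right K.coe_nonneg) hsum
    rw [Real.norm_eq_abs] at h1; linarith
  have h₁ := s13_absint hμ zero_le_one hf1
  have h₂ := s13_absint hρ zero_le_one hf1
  have := abs_sub_abs_le_abs_sub (∫ x, f x ∂μ) (∫ x, f x ∂ρ)
  calc (∫ x, f x ∂μ) - ∫ x, f x ∂ρ ≤ |∫ x, f x ∂μ| + |∫ x, f x ∂ρ| := by
        have := abs_sub ((∫ x, f x ∂μ)) ((∫ x, f x ∂ρ))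
        calc (∫ x, f x ∂μ) - ∫ x, f x ∂ρ ≤ |(∫ x, f x ∂μ) - ∫ x, f x ∂ρ| := le_abs_self _
          _ ≤ |∫ x, f x ∂μ| + |∫ x, f x ∂ρ| := abs_sub _ _
    _ ≤ 2 := by linarith

lemma s13_blDist_nonneg {μ ρ : Measure ℝ} (hμ : μ Set.univ ≤ 1) (hρ : ρ Set.univ ≤ 1) :
    0 ≤ blDist μ ρ := by
  refine le_csSup (s13_bddAbove hμ hρ) ⟨0, ⟨0, ?_, by simp⟩, by simp⟩
  simpa using LipschitzWith.const (0 : ℝ)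

lemma s13_shift_cs {g : ℝ → ℝ} (hgcs : HasCompactSupport g) (x0 : ℝ) :
    HasCompactSupport fun y => g (x0 - y) :=
  hgcs.comp_homeomorph (Homeomorph.subLeft x0)

/-- The shifted-scaled test function as a `C₀`. -/
noncomputable def s13_testFun {g : ℝ → ℝ} (hgc : Continuous g) (hgcs : HasCompactSupport g)
    (c x0 : ℝ) : C₀(ℝ, ℝ) :=
  ⟨⟨fun y => c⁻¹ * g (x0 - y),
    (continuous_const.mul (hgc.comp (continuous_const.sub continuous_id)))⟩, by
    have hcs2 : HasCompactSupport fun y : ℝ => c⁻¹ * g (x0 - y) := by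
      have := (s13_shift_cs hgcs x0).mul_left (f := fun _ : ℝ => c⁻¹)
      exact this
    exact hcs2.is_zero_at_infty⟩

lemma s13_testFun_apply {g : ℝ → ℝ} (hgc : Continuous g) (hgcs : HasCompactSupport g)
    (c x0 y : ℝ) : s13_testFun hgc hgcs c x0 y = c⁻¹ * g (x0 - y) := rfl

lemma s13_bl_onesided {μ ρ : Measure ℝ} (hμ : μ Set.univ ≤ 1) (hρ : ρ Set.univ ≤ 1)
    {g : ℝ → ℝ} {K : NNReal} {B : ℝ} (hgl : LipschitzWith K g) (hgc : Continuous g)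
    (hgcs : HasCompactSupport g) (hB0 : 0 ≤ B) (hB : ∀ y, |g y| ≤ B) (x0 : ℝ) :
    (∫ y, g (x0 - y) ∂μ) - (∫ y, g (x0 - y) ∂ρ) ≤ (B + (K : ℝ) + 1) * blDist μ ρ := by
  haveI := s13_finite hμ; haveI := s13_finite hρ
  set c : ℝ := B + (K : ℝ) + 1 with hc
  have hcpos : 0 < c := by positivity
  set F : C₀(ℝ, ℝ) := s13_testFun hgc hgcs c x0 with hF
  have hFapp : ∀ y, F y = c⁻¹ * g (x0 - y) := fun y => rfl
  have hKc : (0:ℝ) ≤ c⁻¹ * K := by positivity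
  have htest : BLtest F := by
    refine ⟨Real.toNNReal (c⁻¹ * K), ?_, ?_⟩
    · apply LipschitzWith.of_dist_le_mul
      intro a b
      rw [Real.coe_toNNReal _ hKc]
      have h := hgl.dist_le_mul (x0 - a) (x0 - b)
      rw [Real.dist_eq, Real.dist_eq] at h
      have habs : |x0 - a - (x0 - b)| = |a - b| := by
        rw [abs_sub_comm]; ring_nf
      rw [habs] at h
      simp only [Real.dist_eq, hFapp]
      calc |c⁻¹ * g (x0 - a) - c⁻¹ * g (x0 - b)| = c⁻¹ * |g (x0 - a) - g (x0 - b)| := by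
            rw [← mul_sub, abs_mul, abs_of_nonneg (inv_nonneg.mpr hcpos.le)]
        _ ≤ c⁻¹ * ((K : ℝ) * |a - b|) :=
            mul_le_mul_of_nonneg_left h (inv_nonneg.mpr hcpos.le)
        _ = c⁻¹ * (K : ℝ) * |a - b| := by ring
    · have hnorm : ‖F‖ ≤ c⁻¹ * B := by
        rw [← ZeroAtInftyContinuousMap.norm_toBCF_eq_norm]
        refine (BoundedContinuousFunction.norm_le (by positivity)).mpr fun y => ?_
        have : F.toBCF y = c⁻¹ * g (x0 - y) := rfl
        rw [this, Real.norm_eq_abs, abs_mul, abs_of_nonneg (inv_nonneg.mpr hcpos.le)]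
        exact mul_le_mul_of_nonneg_left (hB _) (inv_nonneg.mpr hcpos.le)
      have hrt : Real.toNNReal (c⁻¹ * K) = (c⁻¹ * K : ℝ).toNNReal := rfl
      have hcoe : ((Real.toNNReal (c⁻¹ * K)) : ℝ) = c⁻¹ * K := Real.coe_toNNReal _ hKc
      rw [hcoe]
      have : c⁻¹ * B + c⁻¹ * (K : ℝ) = c⁻¹ * (B + K) := by ring
      have hle : c⁻¹ * (B + (K:ℝ)) ≤ c⁻¹ * c := by
        apply mul_le_mul_of_nonneg_left _ (inv_nonneg.mpr hcpos.le)
        rw [hc]; linarith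
      rw [inv_mul_cancel₀ hcpos.ne'] at hle
      linarith
  have hint : ∀ ρ' : Measure ℝ, (∫ y, F y ∂ρ') = c⁻¹ * ∫ y, g (x0 - y) ∂ρ' := by
    intro ρ'
    have : (∫ y, F y ∂ρ') = ∫ y, c⁻¹ * g (x0 - y) ∂ρ' := by
      refine integral_congr_ae (Filter.Eventually.of_forall fun y => hFapp y)
    rw [this, MeasureTheory.integral_const_mul]
  have hmem : c⁻¹ * (∫ y, g (x0 - y) ∂μ) - c⁻¹ * (∫ y, g (x0 - y) ∂ρ) ≤ blDist μ ρ := by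
    refine le_csSup (s13_bddAbove hμ hρ) ⟨F, htest, ?_⟩
    rw [hint μ, hint ρ]
  calc (∫ y, g (x0 - y) ∂μ) - (∫ y, g (x0 - y) ∂ρ)
      = c * (c⁻¹ * (∫ y, g (x0 - y) ∂μ) - c⁻¹ * (∫ y, g (x0 - y) ∂ρ)) := by
        field_simp
    _ ≤ c * blDist μ ρ := mul_le_mul_of_nonneg_left hmem hcpos.le

lemma s13_bl_bound {μ ρ : Measure ℝ} (hμ : μ Set.univ ≤ 1) (hρ : ρ Set.univ ≤ 1)
    {g : ℝ → ℝ} {K : NNReal} {B : ℝ} (hgl : LipschitzWith K g) (hgc : Continuous g)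
    (hgcs : HasCompactSupport g) (hB0 : 0 ≤ B) (hB : ∀ y, |g y| ≤ B) (x0 : ℝ) :
    |(∫ y, g (x0 - y) ∂μ) - ∫ y, g (x0 - y) ∂ρ| ≤ (B + (K : ℝ) + 1) * blDist μ ρ := by
  rw [abs_sub_le_iff]
  constructor
  · exact s13_bl_onesided hμ hρ hgl hgc hgcs hB0 hB x0
  · have hneg := s13_bl_onesided hμ hρ (g := fun y => -g y) (K := K) (B := B)
      ?_ (hgc.neg) (hgcs.comp_left (g := fun r : ℝ => -r) neg_zero) hB0
      (fun y => by simpa using hB y) x0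
    · have h1 : (∫ y, -g (x0 - y) ∂μ) = -∫ y, g (x0 - y) ∂μ := integral_neg _
      have h2 : (∫ y, -g (x0 - y) ∂ρ) = -∫ y, g (x0 - y) ∂ρ := integral_neg _
      rw [h1, h2] at hneg
      linarith
    · exact hgl.neg

lemma s13_conv_abs_le {μ : Measure ℝ} (hμ : μ Set.univ ≤ 1) {g : ℝ → ℝ} {B : ℝ}
    (hB : ∀ y, |g y| ≤ B) (x0 : ℝ) : |∫ y, g (x0 - y) ∂μ| ≤ B := by
  have hB0 : 0 ≤ B := le_trans (abs_nonneg _) (hB 0)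
  exact s13_absint hμ hB0 (fun y => hB _)

lemma s13_conv_lip {μ : Measure ℝ} (hμ : μ Set.univ ≤ 1) {g : ℝ → ℝ} {K : NNReal} {B : ℝ}
    (hgl : LipschitzWith K g) (hgc : Continuous g) (hB : ∀ y, |g y| ≤ B) (x x' : ℝ) :
    |(∫ y, g (x - y) ∂μ) - ∫ y, g (x' - y) ∂μ| ≤ (K : ℝ) * |x - x'| := by
  haveI := s13_finite hμ
  have hmi : ∀ z : ℝ, Integrable (fun y => g (z - y)) μ :=
    fun z => s13_integrable ((hgc.comp (continuous_const.sub continuous_id)).aestronglyMeasurable)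
      (fun y => hB _)
  rw [← integral_sub (hmi x) (hmi x')]
  refine s13_absint hμ (by positivity) fun y => ?_
  have h := hgl.dist_le_mul (x - y) (x' - y)
  rw [Real.dist_eq, Real.dist_eq] at h
  have habs : |x - y - (x' - y)| = |x - x'| := by ring_nf
  rwa [habs] at h

lemma s13_contOn {mm : ℝ → Measure ℝ} (hmassm : ∀ t, 0 ≤ t → mm t Set.univ ≤ 1)
    (hc : BLContinuous mm) {g : ℝ → ℝ} {K : NNReal} {B : ℝ}
    (hgl : LipschitzWith K g) (hgc : Continuous g) (hgcs : HasCompactSupport g)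
    (hB0 : 0 ≤ B) (hB : ∀ y, |g y| ≤ B) :
    ContinuousOn (fun p : ℝ × ℝ => ∫ y, g (p.2 - y) ∂mm p.1) (Set.Ici 0 ×ˢ Set.univ) := by
  rw [Metric.continuousOn_iff]
  rintro ⟨t, x⟩ hp ε hε
  have ht : (0:ℝ) ≤ t := hp.1
  set c : ℝ := B + (K : ℝ) + 1 with hcdef
  have hcpos : 0 < c := by positivity
  obtain ⟨δ₁, hδ₁pos, hδ₁⟩ := hc t ht (ε / (2 * c)) (by positivity)
  refine ⟨min δ₁ (ε / (2 * ((K : ℝ) + 1))), lt_min hδ₁pos (by positivity), ?_⟩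
  rintro ⟨s, x'⟩ hq hdist
  have hs : (0:ℝ) ≤ s := hq.1
  have hd1 : dist s t < δ₁ := lt_of_le_of_lt (le_trans (le_max_left _ _) (le_of_eq rfl))
    (lt_of_lt_of_le hdist (min_le_left _ _))
  have hd2 : dist x' x ≤ ε / (2 * ((K : ℝ) + 1)) := by
    have : dist x' x ≤ dist (⟨s, x'⟩ : ℝ × ℝ) ⟨t, x⟩ := le_max_right _ _
    exact le_trans this (le_of_lt (lt_of_lt_of_le hdist (min_le_right _ _)))
  have hbl : blDist (mm s) (mm t) < ε / (2 * c) := hδ₁ s hs (by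
    have : |s - t| = dist s t := (Real.dist_eq s t).symm
    rw [this]; exact hd1)
  have term1 : |(∫ y, g (x' - y) ∂mm s) - ∫ y, g (x - y) ∂mm s| ≤ (K : ℝ) * |x' - x| :=
    s13_conv_lip (hmassm s hs) hgl hgc hB x' x
  have term2 : |(∫ y, g (x - y) ∂mm s) - ∫ y, g (x - y) ∂mm t| ≤ c * blDist (mm s) (mm t) :=
    s13_bl_bound (hmassm s hs) (hmassm t ht) hgl hgc hgcs hB0 hB x
  have h1 : (K : ℝ) * |x' - x| ≤ (K : ℝ) * (ε / (2 * ((K : ℝ) + 1))) := by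
    apply mul_le_mul_of_nonneg_left _ K.coe_nonneg
    rw [← Real.dist_eq]; exact hd2
  have h1' : (K : ℝ) * (ε / (2 * ((K : ℝ) + 1))) ≤ ε / 2 := by
    rw [mul_div_assoc']
    rw [div_le_div_iff₀ (by positivity : (0:ℝ) < 2 * ((K:ℝ)+1)) (by norm_num : (0:ℝ) < 2)]
    nlinarith [K.coe_nonneg, hε.le]
  have h2 : c * blDist (mm s) (mm t) < c * (ε / (2 * c)) :=
    mul_lt_mul_of_pos_left hbl hcpos
  have h2' : c * (ε / (2 * c)) = ε / 2 := by field_simp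
  rw [Real.dist_eq]
  calc |(∫ y, g (x' - y) ∂mm s) - ∫ y, g (x - y) ∂mm t|
      ≤ |(∫ y, g (x' - y) ∂mm s) - ∫ y, g (x - y) ∂mm s|
        + |(∫ y, g (x - y) ∂mm s) - ∫ y, g (x - y) ∂mm t| := abs_sub_le _ _ _
    _ < ε / 2 + ε / 2 := by
        apply add_lt_add_of_le_of_lt (le_trans term1 (le_trans h1 h1'))
        exact lt_of_le_of_lt term2 (by rw [← h2']; exact h2)
    _ = ε := by ring

lemma s13_approx {F₀ : ℝ → ℝ} (hi : Integrable F₀ volume) {δ : ℝ} (hδ : 0 < δ) :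
    ∃ (g : ℝ → ℝ) (K : NNReal) (B : ℝ), 0 ≤ B ∧ LipschitzWith K g ∧ Continuous g ∧
      HasCompactSupport g ∧ (∀ y, |g y| ≤ B) ∧
      (∫⁻ x, ENNReal.ofReal |F₀ x - g x|) ≤ ENNReal.ofReal δ := by
  obtain ⟨g₀, hg₀cs, hg₀close, hg₀cont, hg₀int⟩ :=
    hi.exists_hasCompactSupport_integral_sub_le (half_pos hδ)
  -- bound for g₀
  obtain ⟨B₀', hB₀'⟩ := hg₀cs.exists_bound_of_continuous hg₀cont
  set B₀ : ℝ := |B₀'| with hB₀def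
  have hB₀ : ∀ x, |g₀ x| ≤ B₀ := fun x =>
    le_trans (by simpa [Real.norm_eq_abs] using hB₀' x) (le_abs_self _)
  have hB₀0 : 0 ≤ B₀ := abs_nonneg _
  -- support of g₀ inside an interval
  obtain ⟨r₀, hr₀⟩ := (hg₀cs.isBounded).subset_closedBall 0
  set r : ℝ := |r₀| + 1 with hrdef
  have hrpos : (0:ℝ) < r := by positivity
  have hsupp : tsupport g₀ ⊆ Set.Icc (-r) r := by
    refine subset_trans hr₀ ?_
    intro z hz
    rw [Metric.mem_closedBall, Real.dist_eq, sub_zero] at hz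
    have h1 : |z| ≤ r := le_trans hz (by rw [hrdef]; nlinarith [le_abs_self r₀, abs_nonneg r₀])
    exact abs_le.mp h1
  have hg₀zero : ∀ z : ℝ, z ∉ Set.Icc (-r) r → g₀ z = 0 := fun z hz =>
    image_eq_zero_of_notMem_tsupport (fun hmem => hz (hsupp hmem))
  -- uniform continuity
  have hu : UniformContinuous g₀ :=
    hg₀cont.uniformContinuous_of_tendsto_cocompact hg₀cs.is_zero_at_infty
  set ε₀ : ℝ := δ / (2 * (2 * r + 2)) with hε₀def
  have hε₀pos : 0 < ε₀ := by positivity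
  obtain ⟨δu, hδupos, hδu⟩ := Metric.uniformContinuous_iff.mp hu ε₀ hε₀pos
  set d : ℝ := min (δu / 2) 1 with hddef
  have hdpos : 0 < d := lt_min (half_pos hδupos) one_pos
  have hd1 : d ≤ 1 := min_le_right _ _
  have hdu : d < δu := lt_of_le_of_lt (min_le_left _ _) (half_lt_self hδupos)
  set G : ℝ → ℝ := fun x => (∫ s in x..(x + d), g₀ s) / d with hGdef
  have hii : ∀ a b : ℝ, IntervalIntegrable g₀ volume a b := fun a b =>
    hg₀cont.intervalIntegrable a b
  -- uniform bound for interval integrals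
  have hIbound : ∀ a b : ℝ, |∫ s in a..b, g₀ s| ≤ B₀ * |b - a| := by
    intro a b
    have := intervalIntegral.norm_integral_le_of_norm_le_const
      (C := B₀) (f := g₀) (a := a) (b := b) (fun s _ => by
        simpa [Real.norm_eq_abs] using hB₀ s)
    simpa [Real.norm_eq_abs] using this
  -- (4) global bound for G
  have hGB : ∀ x, |G x| ≤ B₀ := by
    intro x
    rw [hGdef]
    simp only
    rw [abs_div, abs_of_pos hdpos]
    rw [div_le_iff₀ hdpos]
    have := hIbound x (x + d)
    simpa [abs_of_pos hdpos] using this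
  -- (2) Lipschitz
  have hGlip : LipschitzWith (Real.toNNReal (2 * B₀ / d)) G := by
    apply LipschitzWith.of_dist_le_mul
    intro a b
    rw [Real.coe_toNNReal _ (by positivity), Real.dist_eq, Real.dist_eq]
    have h1 := intervalIntegral.integral_add_adjacent_intervals (hii b a) (hii a (a + d))
    have h2 := intervalIntegral.integral_add_adjacent_intervals (hii b (b + d)) (hii (b + d) (a + d))
    have hnum : (∫ s in a..(a + d), g₀ s) - (∫ s in b..(b + d), g₀ s)
        = (∫ s in (b + d)..(a + d), g₀ s) - (∫ s in b..a, g₀ s) := by linarith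
    have hb1 := hIbound (b + d) (a + d)
    have hb2 := hIbound b a
    have hab : |a + d - (b + d)| = |a - b| := by ring_nf
    rw [hab] at hb1
    have hba : |a - b| = |b - a| ∨ True := Or.inr trivial
    have key : |(∫ s in a..(a + d), g₀ s) - (∫ s in b..(b + d), g₀ s)| ≤ 2 * B₀ * |a - b| := by
      rw [hnum]
      calc |(∫ s in (b + d)..(a + d), g₀ s) - (∫ s in b..a, g₀ s)|
          ≤ |∫ s in (b + d)..(a + d), g₀ s| + |∫ s in b..a, g₀ s| := abs_sub _ _
        _ ≤ B₀ * |a - b| + B₀ * |a - b| := by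
            exact add_le_add hb1 hb2
        _ = 2 * B₀ * |a - b| := by ring
    show |G a - G b| ≤ 2 * B₀ / d * |a - b|
    rw [hGdef]
    simp only
    rw [div_sub_div_same, abs_div, abs_of_pos hdpos, div_le_iff₀ hdpos]
    calc |(∫ s in a..(a + d), g₀ s) - ∫ s in b..(b + d), g₀ s| ≤ 2 * B₀ * |a - b| := key
      _ = 2 * B₀ / d * |a - b| * d := by field_simp
  -- (1) uniform closeness
  have hGclose : ∀ x, |G x - g₀ x| ≤ ε₀ := by
    intro x
    have hkey : G x - g₀ x = (∫ s in x..(x + d), (g₀ s - g₀ x)) / d := by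
      rw [intervalIntegral.integral_sub (hii _ _) (intervalIntegrable_const),
        intervalIntegral.integral_const]
      rw [hGdef]
      simp only
      field_simp
      rw [add_sub_cancel_left, smul_eq_mul]
    rw [hkey, abs_div, abs_of_pos hdpos, div_le_iff₀ hdpos]
    have := intervalIntegral.norm_integral_le_of_norm_le_const
      (C := ε₀) (f := fun s => g₀ s - g₀ x) (a := x) (b := x + d) ?_
    · simpa [Real.norm_eq_abs, abs_of_pos hdpos] using this
    · intro s hs
      rw [Set.uIoc_of_le (by linarith : x ≤ x + d)] at hs
      have hdist : dist s x < δu := by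
        rw [Real.dist_eq, abs_of_pos (by linarith [hs.1] : 0 < s - x)]
        have := hs.2
        linarith [hdu]
      have := hδu hdist
      rw [Real.dist_eq] at this
      exact le_of_lt this
  -- (3) compact support
  have hGzero : ∀ x : ℝ, x ∉ Set.Icc (-r - 1) (r + 1) → G x = 0 := by
    intro x hx
    have : ∀ s ∈ Set.uIcc x (x + d), g₀ s = 0 := by
      intro s hs
      rw [Set.uIcc_of_le (by linarith : x ≤ x + d)] at hs
      apply hg₀zero
      intro hmem
      rw [Set.mem_Icc] at hmem hx
      push_neg at hx
      rcases lt_or_ge x (-r - 1) with h | h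
      · have : s ≤ x + d := hs.2
        have : s < -r := by linarith [hd1]
        linarith [hmem.1]
      · have hx2 : r + 1 < x := hx h
        have : x ≤ s := hs.1
        linarith [hmem.2]
    have : (∫ s in x..(x + d), g₀ s) = 0 := by
      rw [intervalIntegral.integral_congr (g := fun _ => (0:ℝ)) this]
      simp
    rw [hGdef]; simp only [this, zero_div]
  have hGcs : HasCompactSupport G := by
    apply HasCompactSupport.intro (isCompact_Icc (a := -r - 1) (b := r + 1))
    exact hGzero
  have hGcont : Continuous G := hGlip.continuous
  -- L¹ error
  refine ⟨G, Real.toNNReal (2 * B₀ / d), B₀, hB₀0, hGlip, hGcont, hGcs, hGB, ?_⟩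
  have hptwise : ∀ x, ENNReal.ofReal |F₀ x - G x|
      ≤ ENNReal.ofReal |F₀ x - g₀ x| + ENNReal.ofReal |g₀ x - G x| := by
    intro x
    calc ENNReal.ofReal |F₀ x - G x| ≤ ENNReal.ofReal (|F₀ x - g₀ x| + |g₀ x - G x|) := by
          apply ENNReal.ofReal_le_ofReal
          exact abs_sub_le _ _ _
      _ ≤ _ := ENNReal.ofReal_add_le
  have hmeas2 : Measurable fun x => ENNReal.ofReal |g₀ x - G x| :=
    ((hg₀cont.sub hGcont).abs.measurable).ennreal_ofReal
  calc (∫⁻ x, ENNReal.ofReal |F₀ x - G x|)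
      ≤ ∫⁻ x, (ENNReal.ofReal |F₀ x - g₀ x| + ENNReal.ofReal |g₀ x - G x|) :=
        lintegral_mono hptwise
    _ = (∫⁻ x, ENNReal.ofReal |F₀ x - g₀ x|) + ∫⁻ x, ENNReal.ofReal |g₀ x - G x| :=
        lintegral_add_right _ hmeas2
    _ ≤ ENNReal.ofReal (δ / 2) + ENNReal.ofReal (δ / 2) := by
        refine add_le_add ?_ ?_
        · have habs : Integrable (fun x => |F₀ x - g₀ x|) volume := by
            have h' : Integrable (fun x => F₀ x - g₀ x) volume := hi.sub hg₀int
            exact h'.abs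
          have heq : ENNReal.ofReal (∫ x, |F₀ x - g₀ x|)
              = ∫⁻ x, ENNReal.ofReal |F₀ x - g₀ x| :=
            MeasureTheory.ofReal_integral_eq_lintegral_ofReal habs
              (Filter.Eventually.of_forall fun x => abs_nonneg _)
          rw [← heq]
          apply ENNReal.ofReal_le_ofReal
          calc (∫ x, |F₀ x - g₀ x|) = ∫ x, ‖F₀ x - g₀ x‖ := by
                simp [Real.norm_eq_abs]
            _ ≤ δ / 2 := hg₀close
        · -- pointwise indicator bound
          have hind : ∀ x, ENNReal.ofReal |g₀ x - G x|
              ≤ Set.indicator (Set.Icc (-r - 1) (r + 1)) (fun _ => ENNReal.ofReal ε₀) x := by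
            intro x
            by_cases hx : x ∈ Set.Icc (-r - 1) (r + 1)
            · rw [Set.indicator_of_mem hx]
              apply ENNReal.ofReal_le_ofReal
              rw [abs_sub_comm]
              exact hGclose x
            · rw [Set.indicator_of_notMem hx]
              have h1 : g₀ x = 0 := by
                apply hg₀zero
                intro hmem
                apply hx
                rw [Set.mem_Icc] at hmem ⊢
                constructor <;> linarith [hmem.1, hmem.2]
              have h2 : G x = 0 := hGzero x hx
              simp [h1, h2]
          calc (∫⁻ x, ENNReal.ofReal |g₀ x - G x|)
              ≤ ∫⁻ x, Set.indicator (Set.Icc (-r - 1) (r + 1))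
                  (fun _ => ENNReal.ofReal ε₀) x := lintegral_mono hind
            _ = ENNReal.ofReal ε₀ * volume (Set.Icc (-r - 1) (r + 1)) := by
                rw [lintegral_indicator measurableSet_Icc]
                simp [Measure.restrict_apply_univ, mul_comm]
            _ = ENNReal.ofReal ε₀ * ENNReal.ofReal (2 * r + 2) := by
                rw [Real.volume_Icc]
                congr 1
                ring_nf
            _ = ENNReal.ofReal (ε₀ * (2 * r + 2)) := by
                rw [ENNReal.ofReal_mul hε₀pos.le]
            _ = ENNReal.ofReal (δ / 2) := by
                congr 1
                rw [hε₀def]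
                field_simp
    _ = ENNReal.ofReal δ := by
        rw [← ENNReal.ofReal_add (by positivity) (by positivity)]
        congr 1
        ring

/-- local `L¹` convergence of `∂ₓᵏ u⁽ᴺ⁾` to `∂ₓᵏ u`.  If `m⁽ᴺ⁾(t) → m(t)`
weak* for every `t ≥ 0`, with all values positive measures of mass at most `1` and all
maps continuous for the bounded Lipschitz metric, then for every `R > 0` and `k ≤ n`,
`∫₀^R ∫_{−R}^{R} |(Fₖ*m⁽ᴺ⁾(t))(x) − (Fₖ*m(t))(x)| dx dt → 0`. -/
theorem statement13 (n : ℕ) (ν : Fin (n + 1) → MeasureTheory.SignedMeasure ℝ)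
    (F : Fin (n + 1) → ℝ → ℝ)
    (hF : ∀ k, ∀ x : ℝ, F k x = ν k (Set.Iio x))
    (hFint : ∀ k, Integrable (F k) volume)
    (mseq : ℕ → ℝ → MeasureTheory.Measure ℝ) (m : ℝ → MeasureTheory.Measure ℝ)
    (hmassseq : ∀ N : ℕ, ∀ t : ℝ, 0 ≤ t → mseq N t Set.univ ≤ 1)
    (hmass : ∀ t : ℝ, 0 ≤ t → m t Set.univ ≤ 1)
    (hcontseq : ∀ N : ℕ, BLContinuous (mseq N)) (hcont : BLContinuous m)
    (hconv : ∀ t : ℝ, 0 ≤ t → ∀ f : C₀(ℝ, ℝ),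
      Tendsto (fun N => ∫ x, f x ∂mseq N t) atTop (nhds (∫ x, f x ∂m t))) :
    ∀ R : ℝ, 0 < R → ∀ k : Fin (n + 1),
      Tendsto
        (fun N => ∫⁻ t in Set.Icc 0 R, ∫⁻ x in Set.Icc (-R) R,
          ENNReal.ofReal
            |(∫ y : ℝ, F k (x - y) ∂mseq N t) - ∫ y : ℝ, F k (x - y) ∂m t|)
        atTop (nhds 0) := by
  intro R hR k
  obtain ⟨C, hC0, hCb, hCm⟩ := s13_bdd (ν k)
  have hFeq : F k = fun x => (ν k) (Set.Iio x) := funext (hF k)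
  have hFm : Measurable (F k) := by rw [hFeq]; exact hCm
  have hFb : ∀ x, |F k x| ≤ C := by intro x; rw [hF k x]; exact hCb x
  rw [ENNReal.tendsto_nhds_zero]
  intro ε hε
  set εm : ENNReal := min ε 1 with hεm
  have hεm0 : εm ≠ 0 := by
    have : (0:ENNReal) < εm := lt_min hε zero_lt_one
    exact this.ne'
  have hεmtop : εm ≠ ⊤ := by
    refine ne_top_of_le_ne_top ENNReal.one_ne_top (min_le_right _ _)
  set εr : ℝ := εm.toReal with hεr
  have hεrpos : 0 < εr := ENNReal.toReal_pos hεm0 hεmtop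
  set δ : ℝ := εr / (4 * (R + 1)) with hδdef
  have hδpos : 0 < δ := by positivity
  obtain ⟨g, K, B, hB0, hglip, hgcont, hgcs, hgB, hgerr⟩ := s13_approx (hFint k) hδpos
  set M : ENNReal := ∫⁻ x, ENNReal.ofReal |F k x - g x| with hM
  set S : Set (ℝ × ℝ) := (Set.Icc (0:ℝ) R) ×ˢ (Set.Icc (-R) R) with hS
  have hSmeas : MeasurableSet S := measurableSet_Icc.prod measurableSet_Icc
  set ρ : Measure (ℝ × ℝ) :=
    (volume.restrict (Set.Icc (0:ℝ) R)).prod (volume.restrict (Set.Icc (-R) R)) with hρ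
  have hρeq : ρ = ((volume : Measure ℝ).prod volume).restrict S :=
    Measure.prod_restrict _ _
  set Φ : ℕ → ℝ × ℝ → ℝ :=
    fun N p => (∫ y, g (p.2 - y) ∂mseq N p.1) - ∫ y, g (p.2 - y) ∂m p.1 with hΦ
  have hcont1 : ∀ N, ContinuousOn (Φ N) (Set.Ici 0 ×ˢ Set.univ) := fun N =>
    (s13_contOn (hmassseq N) (hcontseq N) hglip hgcont hgcs hB0 hgB).sub
      (s13_contOn hmass hcont hglip hgcont hgcs hB0 hgB)
  have hSsub : S ⊆ Set.Ici 0 ×ˢ Set.univ := by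
    rintro ⟨t, x⟩ hts
    exact ⟨hts.1.1, trivial⟩
  have hΦaem : ∀ N, AEMeasurable (fun p => ENNReal.ofReal |Φ N p|) ρ := by
    intro N
    rw [hρeq]
    have h3 : AEMeasurable (Φ N) (((volume : Measure ℝ).prod volume).restrict S) :=
      ((hcont1 N).mono hSsub).aemeasurable hSmeas
    exact (ENNReal.measurable_ofReal.comp measurable_abs).comp_aemeasurable h3
  have hae : ∀ᵐ p ∂ρ, p ∈ S := by
    rw [hρeq]; exact ae_restrict_mem hSmeas
  set J : ℕ → ENNReal := fun N => ∫⁻ p, ENNReal.ofReal |Φ N p| ∂ρ with hJdef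
  have hJiter : ∀ N, J N = ∫⁻ t in Set.Icc (0:ℝ) R, ∫⁻ x in Set.Icc (-R) R,
      ENNReal.ofReal |Φ N (t, x)| := fun N => lintegral_prod _ (hΦaem N)
  have hJ0 : Tendsto J atTop (nhds 0) := by
    have h := tendsto_lintegral_of_dominated_convergence' (μ := ρ) (f := fun _ => 0)
      (fun _ => ENNReal.ofReal (B + B)) hΦaem ?_ ?_ ?_
    · simpa using h
    · intro N
      filter_upwards [hae] with p hp
      have ht : (0:ℝ) ≤ p.1 := hp.1.1
      have h1 := s13_conv_abs_le (hmassseq N p.1 ht) hgB p.2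
      have h2 := s13_conv_abs_le (hmass p.1 ht) hgB p.2
      apply ENNReal.ofReal_le_ofReal
      calc |Φ N p| ≤ |∫ y, g (p.2 - y) ∂mseq N p.1| + |∫ y, g (p.2 - y) ∂m p.1| := abs_sub _ _
        _ ≤ B + B := add_le_add h1 h2
    · rw [lintegral_const]
      refine ENNReal.mul_ne_top ENNReal.ofReal_ne_top ?_
      rw [hρ, ← Set.univ_prod_univ, Measure.prod_prod, Measure.restrict_apply_univ,
        Measure.restrict_apply_univ]
      exact ENNReal.mul_ne_top measure_Icc_lt_top.ne measure_Icc_lt_top.ne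
    · filter_upwards [hae] with p hp
      have ht : (0:ℝ) ≤ p.1 := hp.1.1
      have hconv2 : Tendsto (fun N => ∫ y, g (p.2 - y) ∂mseq N p.1) atTop
          (nhds (∫ y, g (p.2 - y) ∂m p.1)) :=
        hconv p.1 ht ⟨⟨fun y => g (p.2 - y),
          hgcont.comp (continuous_const.sub continuous_id)⟩,
          (s13_shift_cs hgcs p.2).is_zero_at_infty⟩
      have hdiff : Tendsto (fun N => Φ N p) atTop (nhds 0) := by
        have h' := hconv2.sub (tendsto_const_nhds (x := ∫ y, g (p.2 - y) ∂m p.1))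
        simpa [hΦ] using h'
      have habs : Tendsto (fun N => |Φ N p|) atTop (nhds 0) := by
        simpa using hdiff.abs
      have h'' := (ENNReal.continuous_ofReal.tendsto 0).comp habs
      simpa [Function.comp_def] using h''
  have key : ∀ N, (∫⁻ t in Set.Icc (0:ℝ) R, ∫⁻ x in Set.Icc (-R) R,
      ENNReal.ofReal |(∫ y, F k (x - y) ∂mseq N t) - ∫ y, F k (x - y) ∂m t|)
      ≤ (M + M) * volume (Set.Icc (0:ℝ) R) + J N := by
    intro N
    have hinner : ∀ᵐ t ∂(volume.restrict (Set.Icc (0:ℝ) R)),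
        (∫⁻ x in Set.Icc (-R) R,
          ENNReal.ofReal |(∫ y, F k (x - y) ∂mseq N t) - ∫ y, F k (x - y) ∂m t|)
        ≤ (M + M) + ∫⁻ x in Set.Icc (-R) R, ENNReal.ofReal |Φ N (t, x)| := by
      filter_upwards [ae_restrict_mem measurableSet_Icc] with t ht
      haveI hf1 : IsFiniteMeasure (mseq N t) := s13_finite (hmassseq N t ht.1)
      haveI hf2 : IsFiniteMeasure (m t) := s13_finite (hmass t ht.1)
      set E1 : ℝ → ENNReal :=
        fun x => ∫⁻ y, ENNReal.ofReal |F k (x - y) - g (x - y)| ∂(mseq N t) with hE1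
      set E2 : ℝ → ENNReal :=
        fun x => ∫⁻ y, ENNReal.ofReal |F k (x - y) - g (x - y)| ∂(m t) with hE2
      have hpt : ∀ x, ENNReal.ofReal |(∫ y, F k (x - y) ∂mseq N t) - ∫ y, F k (x - y) ∂m t|
          ≤ E1 x + (ENNReal.ofReal |Φ N (t, x)| + E2 x) := by
        intro x
        have hmF1 : AEStronglyMeasurable (fun y : ℝ => F k (x - y)) (mseq N t) :=
          ((hFm.comp (measurable_const.sub measurable_id))).aestronglyMeasurable
        have hmF2 : AEStronglyMeasurable (fun y : ℝ => F k (x - y)) (m t) :=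
          ((hFm.comp (measurable_const.sub measurable_id))).aestronglyMeasurable
        have hmg1 : AEStronglyMeasurable (fun y : ℝ => g (x - y)) (mseq N t) :=
          ((hgcont.comp (continuous_const.sub continuous_id))).aestronglyMeasurable
        have hmg2 : AEStronglyMeasurable (fun y : ℝ => g (x - y)) (m t) :=
          ((hgcont.comp (continuous_const.sub continuous_id))).aestronglyMeasurable
        have hintF1 : Integrable (fun y => F k (x - y)) (mseq N t) :=
          s13_integrable hmF1 (fun y => hFb _)
        have hintF2 : Integrable (fun y => F k (x - y)) (m t) :=
          s13_integrable hmF2 (fun y => hFb _)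
        have hintg1 : Integrable (fun y => g (x - y)) (mseq N t) :=
          s13_integrable hmg1 (fun y => hgB _)
        have hintg2 : Integrable (fun y => g (x - y)) (m t) :=
          s13_integrable hmg2 (fun y => hgB _)
        have hsplit : (∫ y, F k (x - y) ∂mseq N t) - ∫ y, F k (x - y) ∂m t
            = (∫ y, (F k (x - y) - g (x - y)) ∂mseq N t)
              + (Φ N (t, x) + ∫ y, (g (x - y) - F k (x - y)) ∂m t) := by
          rw [integral_sub hintF1 hintg1, integral_sub hintg2 hintF2]
          simp only [hΦ]
          ring
        rw [hsplit]
        have step1 : ENNReal.ofReal |(∫ y, (F k (x - y) - g (x - y)) ∂mseq N t)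
              + (Φ N (t, x) + ∫ y, (g (x - y) - F k (x - y)) ∂m t)|
            ≤ ENNReal.ofReal |∫ y, (F k (x - y) - g (x - y)) ∂mseq N t|
              + (ENNReal.ofReal |Φ N (t, x)|
                + ENNReal.ofReal |∫ y, (g (x - y) - F k (x - y)) ∂m t|) := by
          refine le_trans (ENNReal.ofReal_le_ofReal (abs_add_le _ _)) ?_
          refine le_trans ENNReal.ofReal_add_le ?_
          refine add_le_add le_rfl ?_
          refine le_trans (ENNReal.ofReal_le_ofReal (abs_add_le _ _)) ?_
          exact ENNReal.ofReal_add_le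
        refine le_trans step1 ?_
        refine add_le_add ?_ (add_le_add le_rfl ?_)
        · exact s13_ofReal_abs_integral (fun y => F k (x - y) - g (x - y))
        · refine le_trans (s13_ofReal_abs_integral (fun y => g (x - y) - F k (x - y))) ?_
          refine le_of_eq (lintegral_congr fun y => ?_)
          rw [abs_sub_comm]
      have hE1m : Measurable E1 := by
        have hm' : Measurable fun z : ℝ × ℝ =>
            ENNReal.ofReal |F k (z.1 - z.2) - g (z.1 - z.2)| :=
          (((hFm.sub hgcont.measurable).comp (measurable_fst.sub measurable_snd)).abs).ennreal_ofReal
        exact hm'.lintegral_prod_right'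
      have hmidm : Measurable fun x => ENNReal.ofReal |Φ N (t, x)| := by
        have hc1 : Continuous fun x => ∫ y, g (x - y) ∂(mseq N t) := by
          refine (LipschitzWith.of_dist_le_mul (K := K) fun a b => ?_).continuous
          rw [Real.dist_eq, Real.dist_eq]
          exact s13_conv_lip (hmassseq N t ht.1) hglip hgcont hgB a b
        have hc2 : Continuous fun x => ∫ y, g (x - y) ∂(m t) := by
          refine (LipschitzWith.of_dist_le_mul (K := K) fun a b => ?_).continuous
          rw [Real.dist_eq, Real.dist_eq]
          exact s13_conv_lip (hmass t ht.1) hglip hgcont hgB a b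
        exact (((hc1.sub hc2).abs).measurable).ennreal_ofReal
      calc (∫⁻ x in Set.Icc (-R) R,
            ENNReal.ofReal |(∫ y, F k (x - y) ∂mseq N t) - ∫ y, F k (x - y) ∂m t|)
          ≤ ∫⁻ x in Set.Icc (-R) R, (E1 x + (ENNReal.ofReal |Φ N (t, x)| + E2 x)) :=
            lintegral_mono hpt
        _ = (∫⁻ x in Set.Icc (-R) R, E1 x)
            + ∫⁻ x in Set.Icc (-R) R, (ENNReal.ofReal |Φ N (t, x)| + E2 x) :=
            lintegral_add_left hE1m _
        _ = (∫⁻ x in Set.Icc (-R) R, E1 x)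
            + ((∫⁻ x in Set.Icc (-R) R, ENNReal.ofReal |Φ N (t, x)|)
              + ∫⁻ x in Set.Icc (-R) R, E2 x) := by
            rw [lintegral_add_left hmidm]
        _ ≤ M + ((∫⁻ x in Set.Icc (-R) R, ENNReal.ofReal |Φ N (t, x)|) + M) := by
            refine add_le_add ?_ (add_le_add le_rfl ?_)
            · exact s13_err (hmassseq N t ht.1) (hFm.sub hgcont.measurable) _
            · exact s13_err (hmass t ht.1) (hFm.sub hgcont.measurable) _
        _ = (M + M) + ∫⁻ x in Set.Icc (-R) R, ENNReal.ofReal |Φ N (t, x)| := by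
            ring
    calc (∫⁻ t in Set.Icc (0:ℝ) R, ∫⁻ x in Set.Icc (-R) R,
          ENNReal.ofReal |(∫ y, F k (x - y) ∂mseq N t) - ∫ y, F k (x - y) ∂m t|)
        ≤ ∫⁻ t in Set.Icc (0:ℝ) R,
            ((M + M) + ∫⁻ x in Set.Icc (-R) R, ENNReal.ofReal |Φ N (t, x)|) :=
          lintegral_mono_ae hinner
      _ = (M + M) * volume (Set.Icc (0:ℝ) R) + J N := by
          rw [lintegral_add_left measurable_const, lintegral_const,
            Measure.restrict_apply_univ, hJiter N]
  have hbound : (M + M) * volume (Set.Icc (0:ℝ) R) ≤ ENNReal.ofReal (εr / 2) := by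
    rw [Real.volume_Icc, sub_zero]
    have hMle : M ≤ ENNReal.ofReal δ := hgerr
    calc (M + M) * ENNReal.ofReal R
        ≤ (ENNReal.ofReal δ + ENNReal.ofReal δ) * ENNReal.ofReal R :=
          mul_le_mul_of_nonneg_right (add_le_add hMle hMle) (by positivity)
      _ = ENNReal.ofReal ((δ + δ) * R) := by
          rw [← ENNReal.ofReal_add hδpos.le hδpos.le,
            ← ENNReal.ofReal_mul (by positivity)]
      _ ≤ ENNReal.ofReal (εr / 2) := by
          apply ENNReal.ofReal_le_ofReal
          have hεrδ : εr = δ * (4 * (R + 1)) := by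
            rw [hδdef]; field_simp
          rw [hεrδ]
          nlinarith [hδpos.le, hR.le, mul_nonneg hδpos.le hR.le]
  have hev : ∀ᶠ N in atTop, J N ≤ ENNReal.ofReal (εr / 2) :=
    (ENNReal.tendsto_nhds_zero.mp hJ0) _ (ENNReal.ofReal_pos.mpr (by positivity))
  filter_upwards [hev] with N hN
  calc (∫⁻ t in Set.Icc (0:ℝ) R, ∫⁻ x in Set.Icc (-R) R,
        ENNReal.ofReal |(∫ y, F k (x - y) ∂mseq N t) - ∫ y, F k (x - y) ∂m t|)
      ≤ (M + M) * volume (Set.Icc (0:ℝ) R) + J N := key N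
    _ ≤ ENNReal.ofReal (εr / 2) + ENNReal.ofReal (εr / 2) := add_le_add hbound hN
    _ = ENNReal.ofReal εr := by
        rw [← ENNReal.ofReal_add (by positivity) (by positivity)]
        congr 1
        ring
    _ = εm := by rw [hεr, ENNReal.ofReal_toReal hεmtop]
    _ ≤ ε := min_le_left _ _
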